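/- arXiv:1309.4670 — 4 statements merged into one kernel-verified Lean document; each statement's English description precedes it below -/
import Mathlib

section
/- Let τ > 0 and let f₁, f₂ : ℝ → ℂ be integrable functions such that for every x ∈ ℝ, ∫_{ℝ} (1/(2√(πτ))) · exp(−(x−ξ)²/(4τ)) · f₁(ξ) dξ = ∫_{ℝ} (1/(2√(πτ))) · exp(−(x−ξ)²/(4τ)) · f₂(ξ) dξ. Then f₁ = f₂ almost everywhere. (Uniqueness part of Theorem 1 in the homogeneous case: the retrospective heat problem has at most one integrable solution.) -/
open MeasureTheory Real

open Complex in
open scoped FourierTransform SchwartzMap ContDiff in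
/-- Fubini step: if the Gaussian convolution of an integrable `g` vanishes
identically, then the Fourier transform of `g` vanishes. -/
private lemma aux_fourier_eq_zero {τ : ℝ} (hτ : 0 < τ) {g : ℝ → ℂ}
    (hg : Integrable g) {K : ℝ → ℂ}
    (hKdef : K = fun y : ℝ => Complex.exp (-(y : ℂ) ^ 2 / (4 * τ)))
    (hconv : ∀ x : ℝ, (∫ ξ : ℝ, K (x - ξ) * g ξ) = 0) :
    ∀ w : ℝ, 𝓕 g w = 0 := by
  have hτc : (τ : ℂ) ≠ 0 := by exact_mod_cast hτ.ne'
  have hπc : (π : ℂ) ≠ 0 := by exact_mod_cast Real.pi_ne_zero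
  -- basic facts about the kernel
  have hKcont : Continuous K := by
    rw [hKdef]; fun_prop
  have hKnorm : ∀ y : ℝ, ‖K y‖ ≤ 1 := by
    intro y
    have h1 : (-(y : ℂ) ^ 2 / (4 * (τ : ℂ))) = ((-(y ^ 2) / (4 * τ) : ℝ) : ℂ) := by
      push_cast; ring
    rw [hKdef]
    simp only [h1]
    rw [Complex.norm_exp_ofReal]
    exact Real.exp_le_one_iff.mpr (div_nonpos_of_nonpos_of_nonneg (neg_nonpos.mpr (sq_nonneg y)) (by positivity))
  -- integrability of the kernel
  have hKint : Integrable K := by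
    have hb : (0 : ℝ) < ((1 / (4 * (τ : ℂ)))).re := by
      have : (1 / (4 * (τ : ℂ))) = ((1 / (4 * τ) : ℝ) : ℂ) := by push_cast; ring
      rw [this, Complex.ofReal_re]; positivity
    have h1 := integrable_cexp_neg_mul_sq hb
    apply h1.congr
    filter_upwards with y
    rw [hKdef]
    congr 1
    ring
  -- the Fourier transform of the Gaussian kernel, via `fourierIntegral_gaussian_pi`
  set b : ℂ := ((1 / (4 * π * τ) : ℝ) : ℂ) with hbdef
  have hbre : 0 < b.re := by rw [hbdef, Complex.ofReal_re]; positivity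
  have hKgauss : K = fun y : ℝ => Complex.exp (-π * b * y ^ 2) := by
    rw [hKdef]
    funext y
    congr 1
    rw [hbdef]
    push_cast
    field_simp
  have hFK : 𝓕 K = fun t : ℝ => 1 / b ^ (1 / 2 : ℂ) * Complex.exp (-π / b * t ^ 2) := by
    rw [hKgauss]
    exact fourier_gaussian_pi hbre
  have hFK_ne : ∀ t : ℝ, 𝓕 K t ≠ 0 := by
    intro t
    rw [hFK]
    have hb0 : b ≠ 0 := by
      intro hb'
      rw [hb'] at hbre
      simp at hbre
    refine mul_ne_zero (one_div_ne_zero ?_) (Complex.exp_ne_zero _)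
    simp only [ne_eq, Complex.cpow_eq_zero_iff, not_and_or]
    exact Or.inl hb0
  -- main Fubini argument
  intro w
  set e : ℝ → ℂ := fun x => Complex.exp (((-2 * π * x * w : ℝ) : ℂ) * Complex.I) with he
  have henorm : ∀ x : ℝ, ‖e x‖ = 1 := by
    intro x
    rw [he]
    exact Complex.norm_exp_ofReal_mul_I _
  have hecont : Continuous e := by rw [he]; fun_prop
  have hbase : Integrable (fun p : ℝ × ℝ => g p.2 * K (p.1 - p.2))
      (volume.prod volume) := by
    have := hg.convolution_integrand (ContinuousLinearMap.mul ℂ ℂ) hKint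
      (μ := volume) (ν := volume)
    simpa using this
  have hF : Integrable (fun p : ℝ × ℝ => e p.1 * (K (p.1 - p.2) * g p.2))
      (volume.prod volume) := by
    have hmeas : AEStronglyMeasurable (fun p : ℝ × ℝ => e p.1 * (K (p.1 - p.2) * g p.2))
        (volume.prod volume) := by
      have h1 := ((hecont.comp continuous_fst).aestronglyMeasurable
        (μ := volume.prod volume)).mul hbase.1
      apply h1.congr
      filter_upwards with p
      show e p.1 * (g p.2 * K (p.1 - p.2)) = _
      ring
    apply Integrable.mono' hbase.norm hmeas
    filter_upwards with p
    rw [norm_mul, henorm, one_mul, norm_mul, mul_comm]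
    exact le_of_eq (norm_mul _ _).symm
  have step1 : (∫ x : ℝ, ∫ ξ : ℝ, e x * (K (x - ξ) * g ξ)) = 0 := by
    simp_rw [integral_const_mul, hconv]
    simp
  have hswap : (∫ ξ : ℝ, ∫ x : ℝ, e x * (K (x - ξ) * g ξ)) = 0 := by
    rw [← integral_integral_swap hF]
    exact step1
  have hA : ∀ ξ : ℝ, (∫ x : ℝ, e x * (K (x - ξ) * g ξ)) = (e ξ * 𝓕 K w) * g ξ := by
    intro ξ
    have t1 : (∫ x : ℝ, e x * (K (x - ξ) * g ξ)) = (∫ x : ℝ, e x * K (x - ξ)) * g ξ := by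
      rw [← integral_mul_const]
      congr 1
      funext x
      ring
    have t2 : (∫ x : ℝ, e x * K (x - ξ)) = ∫ y : ℝ, e (y + ξ) * K y := by
      rw [← integral_add_right_eq_self (fun x => e x * K (x - ξ)) ξ]
      simp
    have t3 : ∀ y : ℝ, e (y + ξ) = e y * e ξ := by
      intro y
      rw [he]
      dsimp only
      rw [← Complex.exp_add]
      congr 1
      push_cast
      ring
    have t4 : (∫ y : ℝ, e (y + ξ) * K y) = e ξ * ∫ y : ℝ, e y * K y := by
      simp_rw [t3]
      rw [← integral_const_mul]
      congr 1
      funext y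
      ring
    have t5 : (∫ y : ℝ, e y * K y) = 𝓕 K w := by
      rw [Real.fourier_real_eq_integral_exp_smul]
      simp only [smul_eq_mul, he]
    rw [t1, t2, t4, t5]
  have hmain : (𝓕 K w) * (∫ ξ : ℝ, e ξ * g ξ) = 0 := by
    rw [← integral_const_mul, ← hswap]
    congr 1
    funext ξ
    rw [hA ξ]
    ring
  have hFg : (∫ ξ : ℝ, e ξ * g ξ) = 0 := by
    rcases mul_eq_zero.1 hmain with h' | h'
    · exact absurd h' (hFK_ne w)
    · exact h'
  rw [Real.fourier_real_eq_integral_exp_smul]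
  simp only [smul_eq_mul, he] at hFg ⊢
  exact hFg

open Complex in
open scoped FourierTransform SchwartzMap ContDiff in
/-- An integrable function on `ℝ` with vanishing Fourier transform vanishes a.e. -/
private lemma aux_ae_zero_of_fourier_zero {g : ℝ → ℂ} (hg : Integrable g)
    (hFg : ∀ w : ℝ, 𝓕 g w = 0) : ∀ᵐ x ∂(volume : Measure ℝ), g x = 0 := by
  apply ae_eq_zero_of_integral_contDiff_smul_eq_zero hg.locallyIntegrable
  intro ψ hψ hψc
  -- the complexification of the test function is a Schwartz function
  set Ψ : ℝ → ℂ := fun x => (ψ x : ℂ) with hΨdef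
  have hΨs : ContDiff ℝ ∞ Ψ := Complex.ofRealCLM.contDiff.comp hψ
  have hΨc : HasCompactSupport Ψ := hψc.comp_left (g := fun r : ℝ => (r : ℂ)) (by simp)
  let Φ₀ : 𝓢(ℝ, ℂ) :=
    { toFun := Ψ
      smooth' := hΨs
      decay' := by
        intro k n
        have h1 : HasCompactSupport (iteratedFDeriv ℝ n Ψ) := hΨc.iteratedFDeriv n
        have h2 : Continuous (iteratedFDeriv ℝ n Ψ) :=
          hΨs.continuous_iteratedFDeriv (by exact_mod_cast le_top)
        have h3 : Continuous fun x : ℝ => ‖x‖ ^ k * ‖iteratedFDeriv ℝ n Ψ x‖ :=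
          ((continuous_norm.pow k).mul h2.norm)
        have h4 : HasCompactSupport fun x : ℝ => ‖x‖ ^ k * ‖iteratedFDeriv ℝ n Ψ x‖ :=
          h1.norm.mul_left
        obtain ⟨C, hC⟩ := h3.bounded_above_of_compact_support h4
        refine ⟨C, fun x => ?_⟩
        exact (le_abs_self _).trans (hC x) }
  set Φ : 𝓢(ℝ, ℂ) := (SchwartzMap.fourierTransformCLE ℂ 𝓢(ℝ, ℂ)).symm Φ₀ with hΦdef
  have hΦ : 𝓕 ⇑Φ = Ψ := by
    have h5 := (SchwartzMap.fourierTransformCLE ℂ 𝓢(ℝ, ℂ)).apply_symm_apply Φ₀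
    rw [← SchwartzMap.fourier_coe, ← SchwartzMap.fourierTransformCLE_apply (R := ℂ) (E := 𝓢(ℝ, ℂ)), hΦdef]
    exact congrArg (fun f : 𝓢(ℝ, ℂ) => (f : ℝ → ℂ)) h5
  have hflip : (innerₗ ℝ).flip = innerₗ ℝ := by
    apply LinearMap.ext; intro x; apply LinearMap.ext; intro y
    simp [real_inner_comm]
  have hmul := VectorFourier.integral_fourierIntegral_smul_eq_flip
    (L := innerₗ ℝ) (μ := (volume : Measure ℝ)) (ν := (volume : Measure ℝ))
    Real.continuous_fourierChar (by exact continuous_inner) Φ.integrable hg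
  rw [hflip] at hmul
  have hLHS : (∫ ξ : ℝ, (VectorFourier.fourierIntegral Real.fourierChar volume
      (innerₗ ℝ) (⇑Φ) ξ) • g ξ) = ∫ ξ : ℝ, ψ ξ • g ξ := by
    congr 1
    funext ξ
    have : VectorFourier.fourierIntegral Real.fourierChar volume (innerₗ ℝ) (⇑Φ) ξ
        = Ψ ξ := by rw [show VectorFourier.fourierIntegral Real.fourierChar volume
          (innerₗ ℝ) (⇑Φ) ξ = 𝓕 ⇑Φ ξ from rfl, hΦ]
    rw [this, hΨdef]
    simp [Complex.real_smul]
  have hRHS : (∫ x : ℝ, Φ x • (VectorFourier.fourierIntegral Real.fourierChar volume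
      (innerₗ ℝ) g x)) = 0 := by
    have : ∀ x : ℝ, VectorFourier.fourierIntegral Real.fourierChar volume (innerₗ ℝ) g x = 0 :=
      fun x => hFg x
    simp [this]
  rw [hLHS] at hmul
  rw [hmul, hRHS]

open scoped FourierTransform in
/-- Uniqueness for the retrospective heat problem on the line: if two integrable
initial distributions produce the same temperature field at time `τ > 0`, they
agree almost everywhere. -/
theorem retrospective_heat_uniqueness
    (τ : ℝ) (hτ : 0 < τ) (f₁ f₂ : ℝ → ℂ)
    (hf₁ : Integrable f₁) (hf₂ : Integrable f₂)
    (h : ∀ x : ℝ,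
      (∫ ξ : ℝ, (1 / (2 * Real.sqrt (π * τ)) : ℂ) *
          Complex.exp (-(((x : ℂ) - ξ) ^ 2) / (4 * τ)) * f₁ ξ) =
      ∫ ξ : ℝ, (1 / (2 * Real.sqrt (π * τ)) : ℂ) *
          Complex.exp (-(((x : ℂ) - ξ) ^ 2) / (4 * τ)) * f₂ ξ) :
    f₁ =ᵐ[volume] f₂ := by
  set g : ℝ → ℂ := fun ξ => f₁ ξ - f₂ ξ with hgdef
  have hg : Integrable g := hf₁.sub hf₂
  set K : ℝ → ℂ := fun y : ℝ => Complex.exp (-(y : ℂ) ^ 2 / (4 * τ)) with hKdef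
  have hKcont : Continuous K := by rw [hKdef]; fun_prop
  have hKnorm : ∀ y : ℝ, ‖K y‖ ≤ 1 := by
    intro y
    have h1 : (-(y : ℂ) ^ 2 / (4 * (τ : ℂ))) = ((-(y ^ 2) / (4 * τ) : ℝ) : ℂ) := by
      push_cast; ring
    rw [hKdef]
    simp only [h1]
    rw [Complex.norm_exp_ofReal]
    exact Real.exp_le_one_iff.mpr
      (div_nonpos_of_nonpos_of_nonneg (neg_nonpos.mpr (sq_nonneg y)) (by positivity))
  set c : ℂ := (1 / (2 * Real.sqrt (π * τ)) : ℂ) with hcdef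
  have hc0 : c ≠ 0 := by
    rw [hcdef]
    apply one_div_ne_zero
    apply mul_ne_zero two_ne_zero
    exact_mod_cast (Real.sqrt_pos.mpr (by positivity)).ne'
  have hker : ∀ x ξ : ℝ, (1 / (2 * Real.sqrt (π * τ)) : ℂ) *
      Complex.exp (-(((x : ℂ) - ξ) ^ 2) / (4 * τ)) = c * K (x - ξ) := by
    intro x ξ
    rw [hcdef, hKdef]
    push_cast
    ring_nf
  have hKfint : ∀ (x : ℝ) (f : ℝ → ℂ), Integrable f →
      Integrable (fun ξ => K (x - ξ) * f ξ) := by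
    intro x f hf
    apply hf.bdd_mul (c := 1)
    · exact (hKcont.comp (continuous_const.sub continuous_id)).aestronglyMeasurable
    · exact Filter.Eventually.of_forall fun ξ => hKnorm _
  have hconv : ∀ x : ℝ, (∫ ξ : ℝ, K (x - ξ) * g ξ) = 0 := by
    intro x
    have h1 := h x
    have e₁ : ∀ f : ℝ → ℂ, (∫ ξ : ℝ, (1 / (2 * Real.sqrt (π * τ)) : ℂ) *
        Complex.exp (-(((x : ℂ) - ξ) ^ 2) / (4 * τ)) * f ξ)
        = c * ∫ ξ : ℝ, K (x - ξ) * f ξ := by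
      intro f
      rw [← integral_const_mul]
      congr 1
      funext ξ
      rw [hker x ξ]
      ring
    rw [e₁ f₁, e₁ f₂] at h1
    have h2 : (∫ ξ : ℝ, K (x - ξ) * f₁ ξ) = ∫ ξ : ℝ, K (x - ξ) * f₂ ξ :=
      mul_left_cancel₀ hc0 h1
    have h3 : (fun ξ : ℝ => K (x - ξ) * g ξ)
        = fun ξ : ℝ => K (x - ξ) * f₁ ξ - K (x - ξ) * f₂ ξ := by
      funext ξ
      rw [hgdef]
      ring
    rw [h3, integral_sub (hKfint x f₁ hf₁) (hKfint x f₂ hf₂), h2, sub_self]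
  have hFg : ∀ w : ℝ, 𝓕 g w = 0 := aux_fourier_eq_zero hτ hg hKdef hconv
  have hg0 := aux_ae_zero_of_fourier_zero hg hFg
  filter_upwards [hg0] with x hx
  exact sub_eq_zero.mp hx
end

section
/- Let τ > 0 and let u : ℝ → ℂ be integrable and continuous. Let w(λ) = ∫_{ℝ} exp(−iλξ) · u(ξ) dξ be its Fourier transform, and assume that λ ↦ exp(τλ²) · w(λ) is integrable on ℝ. Define f(x) = (1/(2π)) · ∫_{ℝ} exp(τλ²) · exp(iλx) · w(λ) dλ, and assume f is integrable. Then for every x ∈ ℝ, ∫_{ℝ} (1/(2√(πτ))) · exp(−(x−ξ)²/(4τ)) · f(ξ) dξ = u(x). (Existence part of Theorem 1 in the homogeneous case: formula (9) with φ(x,λ) = e^{iλx} solves the retrospective heat problem.) -/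
open MeasureTheory Real

open FourierTransform

theorem gauss_key (τ : ℝ) (hτ : 0 < τ) (x lam : ℝ) :
    (∫ ξ : ℝ, (1 / (2 * Real.sqrt (π * τ)) : ℂ) *
        Complex.exp (-(((x : ℂ) - ξ) ^ 2) / (4 * τ)) * Complex.exp (Complex.I * lam * ξ))
      = Complex.exp (Complex.I * lam * x) * Complex.exp (-(τ * lam ^ 2)) := by
  have hτ0 : (τ : ℂ) ≠ 0 := Complex.ofReal_ne_zero.mpr hτ.ne'
  set C : ℂ := (1 / (2 * Real.sqrt (π * τ)) : ℂ) with hC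
  have hshift : (∫ ξ : ℝ, C * Complex.exp (-(((x : ℂ) - ξ) ^ 2) / (4 * τ)) *
      Complex.exp (Complex.I * lam * ξ))
      = ∫ y : ℝ, C * Complex.exp (-(((x : ℂ) - (x + y : ℝ)) ^ 2) / (4 * τ)) *
        Complex.exp (Complex.I * lam * (x + y : ℝ)) :=
    (MeasureTheory.integral_add_left_eq_self
      (fun ξ : ℝ => C * Complex.exp (-(((x : ℂ) - ξ) ^ 2) / (4 * τ)) *
        Complex.exp (Complex.I * lam * ξ)) x).symm
  rw [hshift]
  have heq : ∀ y : ℝ, C * Complex.exp (-(((x : ℂ) - (x + y : ℝ)) ^ 2) / (4 * τ)) *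
      Complex.exp (Complex.I * lam * (x + y : ℝ))
      = (Complex.exp (Complex.I * lam * x) * C) *
        (Complex.exp (Complex.I * lam * y) * Complex.exp (-((1 / (4 * τ) : ℝ) : ℂ) * y ^ 2)) := by
    intro y
    rw [mul_assoc, mul_comm (Complex.exp (Complex.I * lam * x)) C, mul_assoc, mul_assoc]
    congr 1
    rw [← Complex.exp_add, ← Complex.exp_add, ← Complex.exp_add]
    congr 1
    push_cast
    field_simp
    ring
  simp_rw [heq]
  rw [integral_const_mul, fourierIntegral_gaussian (by simp [Complex.ofReal_re]; positivity) (lam : ℂ)]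
  have hb : ((π : ℂ) / ((1 / (4 * τ) : ℝ) : ℂ)) ^ (1 / 2 : ℂ) = 2 * Real.sqrt (π * τ) := by
    have h1 : ((π : ℂ) / ((1 / (4 * τ) : ℝ) : ℂ)) = ((4 * (π * τ) : ℝ) : ℂ) := by
      push_cast
      field_simp
    rw [h1, show ((1 : ℂ) / 2) = ((1 / 2 : ℝ) : ℂ) by norm_num,
      ← Complex.ofReal_cpow (by positivity), ← Real.sqrt_eq_rpow,
      show (4 : ℝ) * (π * τ) = 2 ^ 2 * (π * τ) by norm_num,
      Real.sqrt_mul (by positivity), Real.sqrt_sq (by norm_num)]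
    push_cast
    ring
  rw [hb]
  have hexp : -(lam : ℂ) ^ 2 / (4 * ((1 / (4 * τ) : ℝ) : ℂ)) = -(τ * lam ^ 2) := by
    push_cast
    field_simp
  rw [hexp]
  rw [hC]
  have hπs : (Real.sqrt π : ℂ) ≠ 0 := Complex.ofReal_ne_zero.mpr (by positivity)
  have hτs : (Real.sqrt τ : ℂ) ≠ 0 := Complex.ofReal_ne_zero.mpr (by positivity)
  field_simp

/-- Existence for the retrospective heat problem on the line: the Fourier
inversion formula with the regularizing factor `exp(τλ²)` produces an initial
distribution `f` whose heat evolution at time `τ` is `u`. -/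
theorem retrospective_heat_existence
    (τ : ℝ) (hτ : 0 < τ) (u : ℝ → ℂ)
    (hu : Integrable u) (hu_cont : Continuous u)
    (w : ℝ → ℂ)
    (hw : ∀ lam : ℝ, w lam = ∫ ξ : ℝ, Complex.exp (-Complex.I * lam * ξ) * u ξ)
    (hw_int : Integrable (fun lam : ℝ => Complex.exp (τ * lam ^ 2) * w lam))
    (f : ℝ → ℂ)
    (hf : ∀ x : ℝ, f x = (1 / (2 * π) : ℂ) *
      ∫ lam : ℝ, Complex.exp (τ * lam ^ 2) * Complex.exp (Complex.I * lam * x) * w lam)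
    (hf_int : Integrable f) :
    ∀ x : ℝ,
      (∫ ξ : ℝ, (1 / (2 * Real.sqrt (π * τ)) : ℂ) *
          Complex.exp (-(((x : ℂ) - ξ) ^ 2) / (4 * τ)) * f ξ) = u x := by
  intro x
  set C : ℂ := (1 / (2 * Real.sqrt (π * τ)) : ℂ) with hC
  -- measurability and integrability of w
  have hw_meas : AEStronglyMeasurable w (volume : Measure ℝ) := by
    have hwe : w = fun lam : ℝ => Complex.exp (-(τ * lam ^ 2)) *
        (Complex.exp (τ * lam ^ 2) * w lam) := by
      funext lam
      rw [← mul_assoc, ← Complex.exp_add]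
      simp
    rw [hwe]
    have hc : Continuous fun lam : ℝ => Complex.exp (-((τ : ℂ) * (lam : ℂ) ^ 2)) := by fun_prop
    exact hc.aestronglyMeasurable.mul hw_int.aestronglyMeasurable
  have hwi : Integrable w := by
    refine hw_int.mono hw_meas (Filter.Eventually.of_forall fun lam => ?_)
    rw [norm_mul, Complex.norm_exp]
    have hre : ((τ : ℂ) * (lam : ℂ) ^ 2).re = τ * lam ^ 2 := by
      have he : ((τ : ℂ) * (lam : ℂ) ^ 2) = ((τ * lam ^ 2 : ℝ) : ℂ) := by push_cast; ring
      rw [he, Complex.ofReal_re]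
    rw [hre]
    have h1 : (1 : ℝ) ≤ Real.exp (τ * lam ^ 2) := Real.one_le_exp (by positivity)
    nlinarith [norm_nonneg (w lam)]
  -- Gaussian integrability
  have hgC : Integrable (fun ξ : ℝ => Complex.exp (-(((x : ℂ) - ξ) ^ 2) / (4 * τ))) := by
    have h := integrable_cexp_quadratic (b := ((1 / (4 * τ) : ℝ) : ℂ))
      (by simp [Complex.ofReal_re]; positivity) ((x / (2 * τ) : ℝ) : ℂ) ((-(x ^ 2) / (4 * τ) : ℝ) : ℂ)
    refine h.congr (Filter.Eventually.of_forall fun ξ => congrArg Complex.exp ?_)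
    have hτ0 : (τ : ℂ) ≠ 0 := Complex.ofReal_ne_zero.mpr hτ.ne'
    push_cast
    field_simp
    ring
  -- the double integrand
  set F : ℝ → ℝ → ℂ := fun ξ lam =>
    (C * Complex.exp (-(((x : ℂ) - ξ) ^ 2) / (4 * τ))) *
      ((1 / (2 * π) : ℂ) * (Complex.exp (τ * lam ^ 2) * Complex.exp (Complex.I * lam * ξ) * w lam))
    with hF
  have hFint : Integrable (Function.uncurry F) ((volume : Measure ℝ).prod volume) := by
    have hbound : Integrable (fun p : ℝ × ℝ =>
        (‖C‖ * ‖Complex.exp (-(((x : ℂ) - p.1) ^ 2) / (4 * τ))‖) *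
          ((1 / (2 * π)) * ‖Complex.exp (τ * p.2 ^ 2) * w p.2‖))
        ((volume : Measure ℝ).prod volume) :=
      (hgC.norm.const_mul ‖C‖).mul_prod (hw_int.norm.const_mul (1 / (2 * π)))
    refine hbound.mono' ?_ (Filter.Eventually.of_forall fun p => ?_)
    · have hcont : Continuous fun p : ℝ × ℝ =>
          (C * Complex.exp (-(((x : ℂ) - p.1) ^ 2) / (4 * τ))) *
            ((1 / (2 * π) : ℂ) * (Complex.exp ((τ : ℂ) * (p.2 : ℂ) ^ 2) *
              Complex.exp (Complex.I * p.2 * p.1))) := by fun_prop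
      have hwsnd : AEStronglyMeasurable (fun p : ℝ × ℝ => w p.2)
          ((volume : Measure ℝ).prod volume) :=
        hw_meas.comp_quasiMeasurePreserving Measure.quasiMeasurePreserving_snd
      have : Function.uncurry F = fun p : ℝ × ℝ =>
          ((C * Complex.exp (-(((x : ℂ) - p.1) ^ 2) / (4 * τ))) *
            ((1 / (2 * π) : ℂ) * (Complex.exp ((τ : ℂ) * (p.2 : ℂ) ^ 2) *
              Complex.exp (Complex.I * p.2 * p.1)))) * w p.2 := by
        funext p
        simp only [Function.uncurry, hF]
        ring
      rw [this]
      exact hcont.aestronglyMeasurable.mul hwsnd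
    · have h1 : ‖Complex.exp (Complex.I * (p.2 : ℂ) * (p.1 : ℂ))‖ = 1 := by
        rw [Complex.norm_exp]
        simp [mul_comm, mul_assoc]
      have h2 : ‖(1 / (2 * (π : ℂ)))‖ = 1 / (2 * π) := by
        simp
        exact Real.pi_pos.le
      simp only [Function.uncurry, hF, norm_mul, h1, h2, mul_one]
      exact le_of_eq (by ring)
  -- step 1 : rewrite integrand as inner integral
  have step1 : ∀ ξ : ℝ, C * Complex.exp (-(((x : ℂ) - ξ) ^ 2) / (4 * τ)) * f ξ
      = ∫ lam : ℝ, F ξ lam := by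
    intro ξ
    have : (∫ lam : ℝ, F ξ lam)
        = (C * Complex.exp (-(((x : ℂ) - ξ) ^ 2) / (4 * τ))) *
          ((1 / (2 * π) : ℂ) * ∫ lam : ℝ, Complex.exp (τ * lam ^ 2) *
            Complex.exp (Complex.I * lam * ξ) * w lam) := by
      rw [hF]
      simp only
      rw [integral_const_mul, integral_const_mul]
    rw [this, hf ξ, mul_assoc]
  -- swap
  have swap : (∫ ξ : ℝ, ∫ lam : ℝ, F ξ lam) = ∫ lam : ℝ, ∫ ξ : ℝ, F ξ lam :=
    integral_integral_swap hFint
  -- step 2 : inner integral over ξ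
  have step2 : ∀ lam : ℝ, (∫ ξ : ℝ, F ξ lam)
      = (1 / (2 * π) : ℂ) * (Complex.exp (Complex.I * lam * x) * w lam) := by
    intro lam
    have h1 : (∫ ξ : ℝ, F ξ lam)
        = ((1 / (2 * π) : ℂ) * (Complex.exp (τ * lam ^ 2) * w lam)) *
          ∫ ξ : ℝ, C * Complex.exp (-(((x : ℂ) - ξ) ^ 2) / (4 * τ)) *
            Complex.exp (Complex.I * lam * ξ) := by
      rw [← integral_const_mul]
      congr 1
      funext ξ
      rw [hF]
      ring
    rw [h1, hC, gauss_key τ hτ x lam]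
    have h2 : Complex.exp ((τ : ℂ) * (lam : ℂ) ^ 2) * Complex.exp (-((τ : ℂ) * (lam : ℂ) ^ 2)) = 1 := by
      rw [← Complex.exp_add]
      simp
    linear_combination (1 / (2 * (π : ℂ))) * w lam * Complex.exp (Complex.I * lam * x) * h2
  -- assemble & inversion
  calc (∫ ξ : ℝ, C * Complex.exp (-(((x : ℂ) - ξ) ^ 2) / (4 * τ)) * f ξ)
      = ∫ ξ : ℝ, ∫ lam : ℝ, F ξ lam := by
        congr 1
        funext ξ
        exact step1 ξ
    _ = ∫ lam : ℝ, ∫ ξ : ℝ, F ξ lam := swap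
    _ = ∫ lam : ℝ, (1 / (2 * π) : ℂ) * (Complex.exp (Complex.I * lam * x) * w lam) := by
        congr 1
        funext lam
        exact step2 lam
    _ = (1 / (2 * π) : ℂ) * ∫ lam : ℝ, Complex.exp (Complex.I * lam * x) * w lam :=
        integral_const_mul _ _
    _ = u x := by
        -- Fourier inversion
        have h1 : ∀ s : ℝ, 𝓕 u s = w (2 * π * s) := by
          intro s
          rw [Real.fourier_real_eq_integral_exp_smul, hw]
          congr 1
          funext v
          rw [smul_eq_mul]
          congr 1
          push_cast
          ring_nf
        have hFu : Integrable (𝓕 u) := by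
          have he : 𝓕 u = fun s => w (2 * π * s) := funext h1
          rw [he]
          exact hwi.comp_mul_left' (by positivity)
        have hinv := hu_cont.fourierInv_fourier_eq hu hFu
        have h2 : u x = ∫ s : ℝ, Complex.exp (Complex.I * (2 * π * s) * x) * w (2 * π * s) := by
          conv_lhs => rw [← hinv]
          rw [Real.fourierInv_eq']
          congr 1
          funext s
          rw [h1 s, smul_eq_mul]
          congr 1
          simp only [RCLike.inner_apply, starRingEnd_apply, star_trivial]
          push_cast
          ring
        have h3 : (∫ s : ℝ, Complex.exp (Complex.I * (2 * π * s) * x) * w (2 * π * s))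
            = |(2 * π)⁻¹| • ∫ lam : ℝ, Complex.exp (Complex.I * lam * x) * w lam := by
          rw [← Measure.integral_comp_mul_left
            (fun lam : ℝ => Complex.exp (Complex.I * lam * x) * w lam) (2 * π)]
          congr 1
          funext s
          push_cast
          ring_nf
        rw [h2, h3, abs_of_pos (by positivity), ← Complex.coe_smul, smul_eq_mul]
        congr 1
        push_cast
        field_simp
end

section
/- For all real numbers x and λ, the series Σ_{j=0}^{∞} He_j(x) · λ^j / j! converges to exp(λx − λ²/2), where He_j denotes the j-th probabilists' Hermite polynomial. (Corollary 1: with t = 1/2, n = 1 and φ(x,λ) = e^{iλx}, the generating function e^{−λ²/2} e^{λx} = Σ_{j≥0} H_{j1}(x) λ^j / j! holds, with H_{j1} the classical Hermite polynomials.) -/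
open Real Polynomial

open scoped Nat

private lemma nat_key (a k : ℕ) :
    (2 * a - 1)‼ * Nat.choose (2 * a + k) k * (2 ^ a * a.factorial * k.factorial)
      = (2 * a + k).factorial := by
  have h1 : (2 * a)‼ * (2 * a - 1)‼ = (2 * a)! := by
    cases a with
    | zero => simp [Nat.doubleFactorial]
    | succ n =>
      have h : 2 * (n + 1) = (2 * n + 1) + 1 := by ring
      have h' : 2 * (n + 1) - 1 = 2 * n + 1 := by omega
      rw [h', h, Nat.factorial_eq_mul_doubleFactorial]
  have h2 : (2 : ℕ) ^ a * a.factorial = (2 * a)‼ := (Nat.doubleFactorial_two_mul a).symm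
  have h3 : Nat.choose (2 * a + k) k * k.factorial * (2 * a).factorial
      = (2 * a + k).factorial := by
    have := Nat.choose_mul_factorial_mul_factorial (le_add_self : k ≤ 2 * a + k)
    simpa [Nat.add_sub_cancel] using this
  calc (2 * a - 1)‼ * Nat.choose (2 * a + k) k * (2 ^ a * a.factorial * k.factorial)
      = Nat.choose (2 * a + k) k * k.factorial * ((2 * a)‼ * (2 * a - 1)‼) := by
        rw [← h2]; ring
    _ = Nat.choose (2 * a + k) k * k.factorial * (2 * a)! := by rw [h1]
    _ = (2 * a + k).factorial := h3

private lemma coeff_real (x : ℝ) (j a : ℕ) (ha : 2 * a ≤ j) :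
    ((Polynomial.coeff (hermite j) (j - 2 * a) : ℤ) : ℝ)
      = (-1) ^ a * (j.factorial : ℝ)
          / (2 ^ a * a.factorial * (j - 2 * a).factorial) := by
  have hj : 2 * a + (j - 2 * a) = j := by omega
  have hc := Polynomial.coeff_hermite_explicit a (j - 2 * a)
  rw [hj] at hc
  rw [hc]
  have hne : ((2 : ℝ) ^ a * a.factorial * (j - 2 * a).factorial) ≠ 0 :=
    mul_ne_zero (mul_ne_zero (pow_ne_zero _ two_ne_zero)
      (Nat.cast_ne_zero.2 a.factorial_ne_zero))
      (Nat.cast_ne_zero.2 (j - 2 * a).factorial_ne_zero)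
  rw [eq_div_iff hne]
  have hnat := nat_key a (j - 2 * a)
  rw [hj] at hnat
  push_cast [← hnat]
  ring

private lemma hermite_eval_sum (x : ℝ) (j : ℕ) :
    (Polynomial.aeval x (hermite j) : ℝ)
      = ∑ a ∈ Finset.range (j / 2 + 1),
          (-1) ^ a * (j.factorial : ℝ)
            / (2 ^ a * a.factorial * (j - 2 * a).factorial) * x ^ (j - 2 * a) := by
  rw [Polynomial.aeval_eq_sum_range, natDegree_hermite]
  have himg : (Finset.range (j / 2 + 1)).image (fun a => j - 2 * a)
      ⊆ Finset.range (j + 1) := by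
    intro i hi
    simp only [Finset.mem_image, Finset.mem_range] at hi ⊢
    omega
  have hinj : ∀ a ∈ Finset.range (j / 2 + 1), ∀ b ∈ Finset.range (j / 2 + 1),
      j - 2 * a = j - 2 * b → a = b := by
    intro a ha b hb h
    simp only [Finset.mem_range] at ha hb
    omega
  have hzero : ∀ i ∈ Finset.range (j + 1),
      i ∉ (Finset.range (j / 2 + 1)).image (fun a => j - 2 * a) →
      (Polynomial.coeff (hermite j) i : ℤ) • x ^ i = 0 := by
    intro i hi hni
    simp only [Finset.mem_image, Finset.mem_range, not_exists] at hni hi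
    have hodd : Odd (j + i) := by
      rw [Nat.odd_iff]
      by_contra h
      have he : (j + i) % 2 = 0 := by omega
      have h2 := hni ((j - i) / 2)
      omega
    rw [coeff_hermite_of_odd_add hodd]
    simp
  rw [← Finset.sum_subset himg hzero, Finset.sum_image hinj]
  refine Finset.sum_congr rfl fun a ha => ?_
  rw [Finset.mem_range] at ha
  rw [zsmul_eq_mul, coeff_real x j a (by omega)]

private lemma term_eq (lam x : ℝ) (a m : ℕ) :
    (-(lam ^ 2) / 2) ^ a / a.factorial * ((lam * x) ^ m / m.factorial)
      = (-1) ^ a * ((2 * a + m).factorial : ℝ)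
          / (2 ^ a * a.factorial * m.factorial) * x ^ m
          * lam ^ (2 * a + m) / (2 * a + m).factorial := by
  have h1 : (a.factorial : ℝ) ≠ 0 := Nat.cast_ne_zero.2 a.factorial_ne_zero
  have h2 : (m.factorial : ℝ) ≠ 0 := Nat.cast_ne_zero.2 m.factorial_ne_zero
  have h3 : ((2 * a + m).factorial : ℝ) ≠ 0 :=
    Nat.cast_ne_zero.2 (2 * a + m).factorial_ne_zero
  rw [neg_div, neg_pow, div_pow]
  field_simp
  rw [pow_add, pow_mul]
  ring

private lemma fiber_sum (x lam : ℝ) (j : ℕ) :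
    ∑ a : Fin (j / 2 + 1),
        (-(lam ^ 2) / 2) ^ (a : ℕ) / ((a : ℕ).factorial : ℝ) *
          ((lam * x) ^ (j - 2 * (a : ℕ)) / ((j - 2 * (a : ℕ)).factorial : ℝ))
      = Polynomial.aeval x (hermite j) * lam ^ j / (j.factorial : ℝ) := by
  rw [hermite_eval_sum, Finset.sum_mul, Finset.sum_div,
    Fin.sum_univ_eq_sum_range
      (fun a => (-(lam ^ 2) / 2) ^ a / (a.factorial : ℝ) *
        ((lam * x) ^ (j - 2 * a) / ((j - 2 * a).factorial : ℝ)))]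
  refine Finset.sum_congr rfl fun a ha => ?_
  rw [Finset.mem_range] at ha
  have hj : 2 * a + (j - 2 * a) = j := by omega
  have := term_eq lam x a (j - 2 * a)
  rw [hj] at this
  exact this

/-- Generating function of the probabilists' Hermite polynomials:
`Σ_j He_j(x) λ^j / j! = exp(λx − λ²/2)`. -/
theorem hermite_generating_function (x lam : ℝ) :
    HasSum (fun j : ℕ => (Polynomial.aeval x (Polynomial.hermite j)) * lam ^ j / (j.factorial : ℝ))
      (Real.exp (lam * x - lam ^ 2 / 2)) := by
  have h1 : HasSum (fun a : ℕ => (-(lam ^ 2) / 2) ^ a / (a.factorial : ℝ))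
      (Real.exp (-(lam ^ 2) / 2)) := by
    rw [Real.exp_eq_exp_ℝ]
    exact NormedSpace.expSeries_div_hasSum_exp _
  have h2 : HasSum (fun b : ℕ => (lam * x) ^ b / (b.factorial : ℝ))
      (Real.exp (lam * x)) := by
    rw [Real.exp_eq_exp_ℝ]
    exact NormedSpace.expSeries_div_hasSum_exp _
  have hsummable : Summable (fun p : ℕ × ℕ =>
      ((-(lam ^ 2) / 2) ^ p.1 / (p.1.factorial : ℝ)) *
        ((lam * x) ^ p.2 / (p.2.factorial : ℝ))) := by
    apply summable_mul_of_summable_norm (f := fun a : ℕ => (-(lam ^ 2) / 2) ^ a / (a.factorial : ℝ))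
      (g := fun b : ℕ => (lam * x) ^ b / (b.factorial : ℝ))
    · refine (Real.summable_pow_div_factorial |(-(lam ^ 2) / 2)|).congr fun n => ?_
      rw [norm_div, norm_pow, Real.norm_eq_abs, Real.norm_natCast]
    · refine (Real.summable_pow_div_factorial |lam * x|).congr fun n => ?_
      rw [norm_div, norm_pow, Real.norm_eq_abs, Real.norm_natCast]
  have hprod := h1.mul h2 hsummable
  have hexp : Real.exp (-(lam ^ 2) / 2) * Real.exp (lam * x)
      = Real.exp (lam * x - lam ^ 2 / 2) := by
    rw [← Real.exp_add]; ring_nf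
  rw [hexp] at hprod
  let e : (Σ j : ℕ, Fin (j / 2 + 1)) ≃ ℕ × ℕ :=
    { toFun := fun p => ((p.2 : ℕ), p.1 - 2 * (p.2 : ℕ))
      invFun := fun q => ⟨2 * q.1 + q.2, ⟨q.1, by omega⟩⟩
      left_inv := by
        rintro ⟨j, a⟩
        have ha : 2 * (a : ℕ) ≤ j := by have := a.isLt; omega
        refine Sigma.ext (by simp; omega) ?_
        rw [Fin.heq_ext_iff (by simp; omega)]
      right_inv := by
        rintro ⟨a, b⟩
        simp }
  have hs : HasSum (fun p : Σ j : ℕ, Fin (j / 2 + 1) =>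
      ((-(lam ^ 2) / 2) ^ (e p).1 / ((e p).1.factorial : ℝ)) *
        ((lam * x) ^ (e p).2 / ((e p).2.factorial : ℝ)))
      (Real.exp (lam * x - lam ^ 2 / 2)) := e.hasSum_iff.2 hprod
  refine hs.sigma fun j => ?_
  have hf := hasSum_fintype (fun a : Fin (j / 2 + 1) =>
      (-(lam ^ 2) / 2) ^ (a : ℕ) / ((a : ℕ).factorial : ℝ) *
        ((lam * x) ^ (j - 2 * (a : ℕ)) / ((j - 2 * (a : ℕ)).factorial : ℝ)))
  rw [fiber_sum] at hf
  exact hf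
end

section
/- Let α > 0 and τ > 0 be real numbers. For each j ∈ ℕ define the fractal Hermite polynomial H_j^{α,τ}(x) = Σ_{k=0}^{⌊j/2⌋} (−1)^k · τ^{αk} · j! / (Γ(αk+1) · (j−2k)!) · x^{j−2k}, where τ^{αk} is the real power and Γ is the Gamma function. Then for all real λ and x, the series Σ_{j=0}^{∞} H_j^{α,τ}(x) · λ^j / j! converges to E_{α,1}(−λ²τ^{α}) · exp(λx), where E_{α,1}(z) = Σ_{k=0}^{∞} z^k / Γ(αk+1). (Formula (13) in the homogeneous case n = 1, φ(x,−iλ) = e^{λx}: the generating function of the fractal Hermite polynomials is E_{α,1}(−λ²τ^α) φ(x,−iλ) = Σ_{j≥0} H_{jn}(x) λ^j/j!.) -/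
open Real Finset

/-- The fractal Hermite polynomial with parameters `α > 0`, `τ > 0`:
`H_j^{α,τ}(x) = Σ_{k=0}^{⌊j/2⌋} (−1)^k τ^{αk} j! / (Γ(αk+1)(j−2k)!) x^{j−2k}`. -/
noncomputable def fractalHermite (α τ : ℝ) (j : ℕ) (x : ℝ) : ℝ :=
  ∑ k ∈ Finset.range (j / 2 + 1),
    (-1 : ℝ) ^ k * τ ^ (α * k : ℝ) * (j.factorial : ℝ) /
      (Real.Gamma (α * k + 1) * ((j - 2 * k).factorial : ℝ)) * x ^ (j - 2 * k)

lemma aux_summable_gamma (α : ℝ) (hα : 0 < α) (z : ℝ) :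
    Summable fun k : ℕ => ‖z ^ k / Real.Gamma (α * k + 1)‖ := by
  obtain ⟨n, hn1, hnα⟩ : ∃ n : ℕ, 1 ≤ n ∧ 1 ≤ α * n := by
    refine ⟨max 1 ⌈1 / α⌉₊, le_max_left _ _, ?_⟩
    have h1 : (1 : ℝ) / α ≤ (max 1 ⌈1 / α⌉₊ : ℕ) := by
      calc (1:ℝ)/α ≤ (⌈1/α⌉₊ : ℕ) := Nat.le_ceil _
        _ ≤ _ := by exact_mod_cast Nat.cast_le.mpr (le_max_right _ _)
    rw [div_le_iff₀ hα] at h1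
    linarith [h1]
  haveI : NeZero n := ⟨by omega⟩
  set m : ℝ := max |z| 1 with hm
  have hm1 : (1:ℝ) ≤ m := le_max_right _ _
  set M : ℝ := m ^ n with hM
  have hM1 : (1:ℝ) ≤ M := one_le_pow₀ hm1
  have S1 : Summable (fun j : ℕ => M ^ j / (j.factorial : ℝ)) :=
    Real.summable_pow_div_factorial M
  have S2 : Summable (fun p : ℕ × Fin n => M ^ p.1 / (p.1.factorial : ℝ)) := by
    have := Summable.mul_of_nonneg S1 (Summable.of_finite (f := fun _ : Fin n => (1:ℝ)))
      (fun j => by positivity) (fun _ => zero_le_one)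
    simpa using this
  have S3 : Summable (fun k : ℕ => M ^ (k / n) / ((k / n).factorial : ℝ)) := by
    have := (Equiv.summable_iff (Nat.divModEquiv n)
      (f := fun p : ℕ × Fin n => M ^ p.1 / (p.1.factorial : ℝ))).mpr S2
    exact this
  have S4 : Summable (fun k : ℕ => M * (M ^ (k / n) / ((k / n).factorial : ℝ))) :=
    S3.mul_left M
  rw [← summable_nat_add_iff n]
  refine Summable.of_nonneg_of_le (fun k => norm_nonneg _) (fun k => ?_)
    ((summable_nat_add_iff n).mpr S4)
  set p : ℕ := k + n with hp
  have hpn : n ≤ p := by omega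
  have hΓpos : 0 < Real.Gamma (α * p + 1) := Real.Gamma_pos_of_pos (by positivity)
  have hdge1 : 1 ≤ p / n := (Nat.one_le_div_iff (by omega)).mpr hpn
  have hle : ((p / n : ℕ) : ℝ) ≤ α * p := by
    have h1 : ((p / n : ℕ) : ℝ) * n ≤ p := by exact_mod_cast Nat.div_mul_le_self p n
    have h2 : (0:ℝ) ≤ ((p / n : ℕ) : ℝ) := Nat.cast_nonneg _
    nlinarith [hα.le]
  have h2le : (2:ℝ) ≤ ((p / n : ℕ) : ℝ) + 1 := by
    have : (1:ℝ) ≤ ((p / n : ℕ) : ℝ) := by exact_mod_cast hdge1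
    linarith
  have hΓmono : Real.Gamma (((p / n : ℕ) : ℝ) + 1) ≤ Real.Gamma (α * p + 1) := by
    apply Real.Gamma_strictMonoOn_Ici.monotoneOn (Set.mem_Ici.mpr h2le)
      (Set.mem_Ici.mpr (by linarith)) (by linarith)
  have hΓfac : Real.Gamma (((p / n : ℕ) : ℝ) + 1) = ((p / n).factorial : ℝ) :=
    Real.Gamma_nat_eq_factorial _
  have hfacpos : (0:ℝ) < ((p / n).factorial : ℝ) := by positivity
  have hzk : |z| ^ p ≤ M ^ (p / n + 1) := by
    calc |z| ^ p ≤ m ^ p := pow_le_pow_left₀ (abs_nonneg z) (le_max_left _ _) p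
      _ ≤ m ^ (n * (p / n + 1)) := by
          apply pow_le_pow_right₀ hm1
          have h1 := Nat.div_add_mod p n
          have h2 := Nat.mod_lt p (show 0 < n by omega)
          have h3 : n * (p / n + 1) = n * (p / n) + n := by ring
          omega
      _ = M ^ (p / n + 1) := by rw [hM, ← pow_mul]
  have hnorm : ‖z ^ p / Real.Gamma (α * p + 1)‖ = |z| ^ p / Real.Gamma (α * p + 1) := by
    rw [norm_div, norm_pow, Real.norm_eq_abs, Real.norm_eq_abs, abs_of_pos hΓpos]
  rw [hnorm]
  calc |z| ^ p / Real.Gamma (α * p + 1) ≤ |z| ^ p / ((p / n).factorial : ℝ) := by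
        apply div_le_div_of_nonneg_left (by positivity) hfacpos
        rw [← hΓfac]; exact hΓmono
    _ ≤ M ^ (p / n + 1) / ((p / n).factorial : ℝ) := by gcongr
    _ = M * (M ^ (p / n) / ((p / n).factorial : ℝ)) := by
        rw [pow_succ]; field_simp

lemma aux_key (α τ : ℝ) (hα : 0 < α) (hτ : 0 < τ) (lam x : ℝ) (j : ℕ) :
    fractalHermite α τ j x * lam ^ j / (j.factorial : ℝ) =
      ∑ kl ∈ Finset.HasAntidiagonal.antidiagonal j,
        (if 2 ∣ kl.1 then (-lam ^ 2 * τ ^ (α : ℝ)) ^ (kl.1 / 2) /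
            Real.Gamma (α * ((kl.1 / 2 : ℕ) : ℝ) + 1) else 0) *
          ((lam * x) ^ kl.2 / (kl.2.factorial : ℝ)) := by
  rw [Finset.Nat.sum_antidiagonal_eq_sum_range_succ_mk]
  rw [← Finset.sum_filter_of_ne (p := fun p => 2 ∣ p) (f := fun p =>
    (if 2 ∣ p then (-lam ^ 2 * τ ^ (α : ℝ)) ^ (p / 2) /
      Real.Gamma (α * ((p / 2 : ℕ) : ℝ) + 1) else 0) *
      ((lam * x) ^ (j - p) / ((j - p).factorial : ℝ)))
    (by intro p hp hne; by_contra h; simp [h] at hne)]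
  rw [show ((Finset.range (j + 1)).filter (fun p => 2 ∣ p)) =
      (Finset.range (j / 2 + 1)).image (fun k => 2 * k) by
    ext p
    simp only [Finset.mem_filter, Finset.mem_range, Finset.mem_image]
    constructor
    · rintro ⟨hp, k, rfl⟩; exact ⟨k, by omega, rfl⟩
    · rintro ⟨k, hk, rfl⟩; exact ⟨by omega, k, rfl⟩]
  rw [Finset.sum_image (by intro a _ b _ h; beta_reduce at h; omega)]
  unfold fractalHermite
  rw [Finset.sum_mul, Finset.sum_div]
  apply Finset.sum_congr rfl
  intro k hk
  have hk2 : 2 * k ≤ j := by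
    simp only [Finset.mem_range] at hk; omega
  have hdvd : 2 ∣ 2 * k := ⟨k, rfl⟩
  have hdiv : 2 * k / 2 = k := by omega
  rw [if_pos hdvd, hdiv]
  have hΓ : (0:ℝ) < Real.Gamma (α * k + 1) := Real.Gamma_pos_of_pos (by positivity)
  have hτk : τ ^ (α * (k:ℝ)) = (τ ^ (α:ℝ)) ^ k := by
    rw [Real.rpow_mul hτ.le, Real.rpow_natCast]
  have hc : (-lam ^ 2 * τ ^ (α:ℝ)) ^ k = (-1:ℝ) ^ k * lam ^ (2 * k) * τ ^ (α * (k:ℝ)) := by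
    rw [show -lam ^ 2 * τ ^ (α:ℝ) = (-1) * lam ^ 2 * τ ^ (α:ℝ) by ring,
      mul_pow, mul_pow, ← pow_mul, hτk, mul_comm 2 k]
  have hlam : lam ^ (2 * k) * lam ^ (j - 2 * k) = lam ^ j := by
    rw [← pow_add]; congr 1; omega
  rw [hc, mul_pow lam x]
  have hjf : ((j.factorial : ℝ)) ≠ 0 := Nat.cast_ne_zero.mpr j.factorial_ne_zero
  have hjkf : (((j - 2*k).factorial : ℝ)) ≠ 0 := Nat.cast_ne_zero.mpr (j - 2*k).factorial_ne_zero
  field_simp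
  rw [← hlam]
  ring

/-- Generating function of the fractal Hermite polynomials (formula (13), case
`n = 1`): `Σ_j H_j^{α,τ}(x) λ^j / j! = E_{α,1}(−λ²τ^α) e^{λx}`. -/
theorem fractalHermite_generating_function (α τ : ℝ) (hα : 0 < α) (hτ : 0 < τ)
    (lam x : ℝ) :
    HasSum (fun j : ℕ => fractalHermite α τ j x * lam ^ j / (j.factorial : ℝ))
      ((∑' k : ℕ, (-lam ^ 2 * τ ^ (α : ℝ)) ^ k / Real.Gamma (α * k + 1)) *
        Real.exp (lam * x)) := by
  set c : ℝ := -lam ^ 2 * τ ^ (α : ℝ) with hcdef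
  set f : ℕ → ℝ := fun p =>
    if 2 ∣ p then c ^ (p / 2) / Real.Gamma (α * ((p / 2 : ℕ) : ℝ) + 1) else 0 with hfdef
  set g : ℕ → ℝ := fun m => (lam * x) ^ m / (m.factorial : ℝ) with hgdef
  have ha : Summable fun k : ℕ => ‖c ^ k / Real.Gamma (α * k + 1)‖ :=
    aux_summable_gamma α hα c
  have hinj : Function.Injective (fun k : ℕ => 2 * k) := fun a b h => by
    simp only [] at h; omega
  have hcomp : (f ∘ fun k : ℕ => 2 * k) = fun k : ℕ => c ^ k / Real.Gamma (α * k + 1) := by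
    funext k
    simp only [Function.comp, hfdef]
    rw [if_pos ⟨k, rfl⟩, show 2 * k / 2 = k by omega]
  have hsupp : ∀ p, p ∉ Set.range (fun k : ℕ => 2 * k) → f p = 0 := by
    intro p hp
    have h2 : ¬ 2 ∣ p := by rintro ⟨k, rfl⟩; exact hp ⟨k, rfl⟩
    simp [hfdef, h2]
  have hf : HasSum f (∑' k : ℕ, c ^ k / Real.Gamma (α * k + 1)) := by
    rw [← hinj.hasSum_iff hsupp, hcomp]
    exact ha.of_norm.hasSum
  have hnf : Summable fun p => ‖f p‖ := by
    rw [← hinj.summable_iff (f := fun p => ‖f p‖)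
      (fun p hp => by simp [hsupp p hp])]
    exact ha.congr fun k => by
      simp only [Function.comp]
      rw [show f (2 * k) = c ^ k / Real.Gamma (α * k + 1) from congrFun hcomp k]
  have hng : Summable fun m => ‖g m‖ := by
    have heq : (fun m => ‖g m‖) = fun m => |lam * x| ^ m / (m.factorial : ℝ) := by
      funext m
      rw [hgdef]
      rw [norm_div, norm_pow, Real.norm_eq_abs, Real.norm_eq_abs, Nat.abs_cast]
    rw [heq]
    exact Real.summable_pow_div_factorial |lam * x|
  have hgtsum : ∑' m, g m = Real.exp (lam * x) := by
    rw [Real.exp_eq_exp_ℝ, NormedSpace.exp_eq_tsum_div]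
  have hsum_sums : Summable (fun j => ∑ kl ∈ Finset.HasAntidiagonal.antidiagonal j, f kl.1 * g kl.2) :=
    (summable_norm_sum_mul_antidiagonal_of_summable_norm hnf hng).of_norm
  have htsum : ∑' j, (∑ kl ∈ Finset.HasAntidiagonal.antidiagonal j, f kl.1 * g kl.2) =
      (∑' k : ℕ, c ^ k / Real.Gamma (α * k + 1)) * Real.exp (lam * x) := by
    rw [← tsum_mul_tsum_eq_tsum_sum_antidiagonal_of_summable_norm hnf hng,
      hf.tsum_eq, hgtsum]
  have hfinal := hsum_sums.hasSum
  rw [htsum] at hfinal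
  have hkey : (fun j : ℕ => fractalHermite α τ j x * lam ^ j / (j.factorial : ℝ)) =
      fun j => ∑ kl ∈ Finset.HasAntidiagonal.antidiagonal j, f kl.1 * g kl.2 := by
    funext j
    exact aux_key α τ hα hτ lam x j
  rw [hkey]
  exact hfinal
end
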